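/- For every real number e with 0 ≤ e ≤ 1/2 there exists a closed subset E of ∂T such that cap^T(E) = e. -/

import Mathlib

open scoped ENNReal NNReal
open Filter Topology

noncomputable section

/-- The vertex set of the dyadic tree `T`: finite binary strings. The boundary `∂T`
is the set of infinite binary sequences `ℕ → Bool`. `pre ζ k` is the prefix of
length `k` of the boundary point `ζ`. -/
def pre (ζ : ℕ → Bool) (k : ℕ) : List Bool := List.ofFn (fun i : Fin k => ζ i)

/-- The tree condenser capacity `cap^T_n(E)`: the infimum of `Σ_x φ(x)²` over
`φ : T → [0,∞)` with `Iφ(ζ) = Σ_{x ∈ P(ζ)} φ(x) ≥ 1` on `E` and `φ(x) = 0`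
whenever `d(x) ≤ n-1`.  For `n = 0` this is the tree capacity `cap^T(E)`. -/
noncomputable def treeCapN (n : ℕ) (E : Set (ℕ → Bool)) : ℝ≥0∞ :=
  sInf { c | ∃ φ : List Bool → ℝ≥0,
    (∀ ζ ∈ E, 1 ≤ ∑' k : ℕ, (φ (pre ζ k) : ℝ≥0∞)) ∧
    (∀ x : List Bool, x.length < n → φ x = 0) ∧
    c = ∑' x : List Bool, (φ x : ℝ≥0∞) ^ 2 }

/-- The tree capacity `cap^T(E)` of a set `E ⊆ ∂T`. -/
noncomputable def treeCap (E : Set (ℕ → Bool)) : ℝ≥0∞ := treeCapN 0 E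





namespace TreeAux

open scoped Classical

def shift (s : ℕ → Bool) : ℕ → Bool := fun i => s (i + 1)

def admB : (ℕ → Bool) → List Bool → Bool
  | _, [] => true
  | s, a :: t => (s 0 || !a) && admB (shift s) t

def bb : (ℕ → Bool) → ℕ → ℕ
  | _, 0 => 0
  | s, k + 1 => (bif s 0 then 1 else 0) + bb (shift s) k

def psi (s : ℕ → Bool) (x : List Bool) : ℝ≥0 :=
  bif admB s x then (2⁻¹ : ℝ≥0) ^ (bb s x.length) else 0

def w (s : ℕ → Bool) (k : ℕ) : ℝ≥0∞ := (((2⁻¹ : ℝ≥0) ^ (bb s k) : ℝ≥0) : ℝ≥0∞)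

def Rv (s : ℕ → Bool) : ℝ≥0∞ := ∑' k, w s k

def Es (s : ℕ → Bool) : Set (ℕ → Bool) := {ζ | ∀ i, s i = false → ζ i = false}

lemma psi_nil (s : ℕ → Bool) : psi s [] = 1 := by simp [psi, admB, bb]

lemma bb_cons (s : ℕ → Bool) (k : ℕ) :
    bb s (k + 1) = (bif s 0 then 1 else 0) + bb (shift s) k := rfl

lemma psi_cons (s : ℕ → Bool) (a : Bool) (t : List Bool) :
    psi s (a :: t) = (bif s 0 then 2⁻¹ * psi (shift s) t
      else bif a then 0 else psi (shift s) t) := by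
  cases hs : s 0 <;> cases a <;> cases hadm : admB (shift s) t <;>
    simp [psi, admB, hs, hadm, bb_cons, pow_add, mul_comm, mul_inv]

lemma isClosed_Es (s : ℕ → Bool) : IsClosed (Es s) := by
  have h : Es s = ⋂ (i : ℕ) (_ : s i = false), {ζ : ℕ → Bool | ζ i = false} := by
    ext ζ; simp [Es]
  rw [h]
  refine isClosed_iInter fun i => isClosed_iInter fun _ => ?_
  have : {ζ : ℕ → Bool | ζ i = false} = (fun ζ : ℕ → Bool => ζ i) ⁻¹' {false} := rfl
  rw [this]
  exact IsClosed.preimage (continuous_apply i) isClosed_singleton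

lemma one_le_Rv (s : ℕ → Bool) : 1 ≤ Rv s := by
  have h0 : w s 0 = 1 := by simp [w, bb]
  calc (1 : ℝ≥0∞) = w s 0 := h0.symm
    _ ≤ Rv s := ENNReal.le_tsum 0

end TreeAux

namespace TreeAux

lemma tsum_list (F : List Bool → ℝ≥0∞) :
    ∑' x : List Bool, F x
      = F [] + ((∑' t : List Bool, F (false :: t)) + ∑' t : List Bool, F (true :: t)) := by
  have hsplit : ∀ x : List Bool,
      F x = (if x = [] then F x else 0) + (if x = [] then 0 else F x) := by
    intro x; split <;> simp
  calc ∑' x, F x = ∑' x, ((if x = [] then F x else 0) + (if x = [] then 0 else F x)) :=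
        tsum_congr hsplit
    _ = (∑' x, if x = [] then F x else 0) + ∑' x, (if x = [] then 0 else F x) :=
        ENNReal.tsum_add
    _ = F [] + ((∑' t : List Bool, F (false :: t)) + ∑' t : List Bool, F (true :: t)) := by
        congr 1
        · exact tsum_eq_single [] (fun b hb => if_neg hb)
        · have hinj : Function.Injective
              (fun p : Bool × List Bool => p.1 :: p.2 : Bool × List Bool → List Bool) := by
            rintro ⟨a, t⟩ ⟨b, u⟩ h
            simp only [List.cons.injEq] at h
            simp [h.1, h.2]
          have hsupp : Function.support (fun x : List Bool => if x = [] then 0 else F x)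
              ⊆ Set.range (fun p : Bool × List Bool => p.1 :: p.2) := by
            intro x hx
            rcases x with _ | ⟨a, t⟩
            · simp at hx
            · exact ⟨(a, t), rfl⟩
          rw [← hinj.tsum_eq hsupp]
          simp only [List.cons_ne_nil, if_false]
          rw [ENNReal.tsum_prod (f := fun (a : Bool) (t : List Bool) => F (a :: t)), tsum_bool]

def Uv (s : ℕ → Bool) (φ : List Bool → ℝ≥0) : ℝ≥0∞ :=
  ∑' x : List Bool, ((psi s x * φ x : ℝ≥0) : ℝ≥0∞)

lemma Uv_rec (s : ℕ → Bool) (φ : List Bool → ℝ≥0) :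
    Uv s φ = (φ [] : ℝ≥0∞) +
      (bif s 0 then
        2⁻¹ * (Uv (shift s) (fun t => φ (false :: t)) + Uv (shift s) (fun t => φ (true :: t)))
      else Uv (shift s) (fun t => φ (false :: t))) := by
  rw [Uv, tsum_list]
  congr 1
  · rw [psi_nil, one_mul]
  cases hs : s 0
  · have h1 : ∀ t : List Bool, ((psi s (true :: t) * φ (true :: t) : ℝ≥0) : ℝ≥0∞) = 0 := by
      intro t; rw [psi_cons, hs]; simp
    have h0 : ∀ t : List Bool, ((psi s (false :: t) * φ (false :: t) : ℝ≥0) : ℝ≥0∞)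
        = ((psi (shift s) t * φ (false :: t) : ℝ≥0) : ℝ≥0∞) := by
      intro t; rw [psi_cons, hs]; simp
    simp only [Bool.cond_false]
    rw [tsum_congr h1, tsum_congr h0, tsum_zero, add_zero]
    rfl
  · have h : ∀ (a : Bool) (t : List Bool),
        ((psi s (a :: t) * φ (a :: t) : ℝ≥0) : ℝ≥0∞)
          = 2⁻¹ * ((psi (shift s) t * φ (a :: t) : ℝ≥0) : ℝ≥0∞) := by
      intro a t
      rw [psi_cons, hs]
      simp only [Bool.cond_true, mul_assoc, ENNReal.coe_mul]
      congr 1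
      simp
    simp only [Bool.cond_true]
    rw [tsum_congr (h false), tsum_congr (h true), ENNReal.tsum_mul_left,
      ENNReal.tsum_mul_left, ← mul_add]
    rfl

end TreeAux

namespace TreeAux

def QT (n : ℕ) (s : ℕ → Bool) : ℝ≥0∞ :=
  ∑' x : List Bool, if x.length ≤ n then ((psi s x : ℝ≥0∞)) ^ 2 else 0

def RT (n : ℕ) (s : ℕ → Bool) : ℝ≥0∞ := ∑ k ∈ Finset.range (n + 1), w s k

lemma QT_eq : ∀ (n : ℕ) (s : ℕ → Bool), QT n s = RT n s := by
  intro n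
  induction n with
  | zero =>
    intro s
    rw [QT, tsum_list]
    have hz : ∀ (a : Bool) (t : List Bool),
        (if (a :: t).length ≤ 0 then ((psi s (a :: t) : ℝ≥0∞)) ^ 2 else 0) = 0 := by
      intro a t; simp
    rw [tsum_congr (hz false), tsum_congr (hz true)]
    simp [RT, w, psi_nil, bb]
  | succ n ih =>
    intro s
    rw [QT, tsum_list]
    have hcond : ∀ (a : Bool) (t : List Bool),
        (if (a :: t).length ≤ n + 1 then ((psi s (a :: t) : ℝ≥0∞)) ^ 2 else 0)
        = (if t.length ≤ n then ((psi s (a :: t) : ℝ≥0∞)) ^ 2 else 0) := by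
      intro a t
      simp [List.length_cons, Nat.succ_le_succ_iff]
    rw [tsum_congr (hcond false), tsum_congr (hcond true)]
    have hnil : (if ([] : List Bool).length ≤ n + 1 then ((psi s [] : ℝ≥0∞)) ^ 2 else 0)
        = 1 := by simp [psi_nil]
    rw [hnil]
    cases hs : s 0
    · -- no branching at level 0
      have h1 : ∀ t : List Bool,
          (if t.length ≤ n then ((psi s (true :: t) : ℝ≥0∞)) ^ 2 else 0) = 0 := by
        intro t; rw [psi_cons, hs]; simp
      have h0 : ∀ t : List Bool,
          (if t.length ≤ n then ((psi s (false :: t) : ℝ≥0∞)) ^ 2 else 0)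
          = (if t.length ≤ n then ((psi (shift s) t : ℝ≥0∞)) ^ 2 else 0) := by
        intro t; rw [psi_cons, hs]; simp
      rw [tsum_congr h1, tsum_congr h0, tsum_zero, add_zero]
      have : (∑' t : List Bool, if t.length ≤ n then ((psi (shift s) t : ℝ≥0∞)) ^ 2 else 0)
          = RT n (shift s) := ih (shift s)
      rw [this]
      have hw0 : w s 0 = 1 := by simp [w, bb]
      have hwk : ∀ k, w s (k + 1) = w (shift s) k := by
        intro k; simp [w, bb_cons, hs]
      have hRT : RT (n + 1) s = 1 + RT n (shift s) := by
        rw [RT, Finset.sum_range_succ', hw0,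
          Finset.sum_congr rfl (fun k _ => hwk k), add_comm]
        rfl
      rw [hRT]
    · -- branching at level 0
      have h : ∀ (a : Bool) (t : List Bool),
          (if t.length ≤ n then ((psi s (a :: t) : ℝ≥0∞)) ^ 2 else 0)
          = 4⁻¹ * (if t.length ≤ n then ((psi (shift s) t : ℝ≥0∞)) ^ 2 else 0) := by
        intro a t
        rw [psi_cons, hs]
        simp only [Bool.cond_true]
        split
        · rw [ENNReal.coe_mul, mul_pow]
          congr 1
          rw [ENNReal.coe_inv (by norm_num), ENNReal.coe_ofNat]
          rw [← ENNReal.inv_pow]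
          norm_num
        · rw [mul_zero]
      rw [tsum_congr (h false), tsum_congr (h true), ENNReal.tsum_mul_left]
      have hQ : (∑' t : List Bool, if t.length ≤ n then ((psi (shift s) t : ℝ≥0∞)) ^ 2 else 0)
          = RT n (shift s) := ih (shift s)
      rw [hQ]
      have hsum : (1 : ℝ≥0∞) + (4⁻¹ * RT n (shift s) + 4⁻¹ * RT n (shift s))
          = 1 + 2⁻¹ * RT n (shift s) := by
        rw [← two_mul, ← mul_assoc]
        congr 2
        rw [show (4 : ℝ≥0∞)⁻¹ = (2 * 2)⁻¹ by norm_num,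
          ENNReal.mul_inv (by norm_num) (by norm_num)]
        rw [← mul_assoc, ENNReal.mul_inv_cancel (by norm_num) (by norm_num), one_mul]
      rw [hsum]
      have hw0 : w s 0 = 1 := by simp [w, bb]
      have hwk : ∀ k, w s (k + 1) = 2⁻¹ * w (shift s) k := by
        intro k
        simp only [w, bb_cons, hs, Bool.cond_true, pow_add, pow_one, ENNReal.coe_mul]
        rw [ENNReal.coe_inv (by norm_num), ENNReal.coe_ofNat]
        try ring
      have hRT : RT (n + 1) s = 1 + 2⁻¹ * RT n (shift s) := by
        rw [RT, Finset.sum_range_succ', hw0,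
          Finset.sum_congr rfl (fun k _ => hwk k), ← Finset.mul_sum, add_comm]
        rfl
      rw [hRT]

lemma Q_le_R (s : ℕ → Bool) : (∑' x : List Bool, ((psi s x : ℝ≥0∞)) ^ 2) ≤ Rv s := by
  rw [ENNReal.tsum_eq_iSup_sum]
  apply iSup_le
  intro A
  set n := A.sup List.length with hn
  have h1 : (∑ x ∈ A, ((psi s x : ℝ≥0∞)) ^ 2)
      = ∑ x ∈ A, (if x.length ≤ n then ((psi s x : ℝ≥0∞)) ^ 2 else 0) := by
    refine Finset.sum_congr rfl fun x hx => ?_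
    rw [if_pos (Finset.le_sup hx)]
  rw [h1]
  calc (∑ x ∈ A, (if x.length ≤ n then ((psi s x : ℝ≥0∞)) ^ 2 else 0))
      ≤ QT n s := ENNReal.sum_le_tsum A
    _ = RT n s := QT_eq n s
    _ ≤ Rv s := by
        rw [RT, Rv]
        exact ENNReal.sum_le_tsum _

end TreeAux

namespace TreeAux

lemma pre_zero (ζ : ℕ → Bool) : pre ζ 0 = [] := by simp [pre]

lemma pre_succ (ζ : ℕ → Bool) (n : ℕ) : pre ζ (n + 1) = pre ζ n ++ [ζ n] := by
  rw [pre, List.ofFn_succ']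
  simp [pre, List.concat_eq_append]

lemma pre_cons (ζ : ℕ → Bool) (k : ℕ) : pre ζ (k + 1) = ζ 0 :: pre (shift ζ) k := by
  rw [pre, List.ofFn_succ]
  congr 1

lemma length_pre (ζ : ℕ → Bool) (k : ℕ) : (pre ζ k).length = k := by simp [pre]

lemma shift_mem_Es {s ζ : ℕ → Bool} (h : ζ ∈ Es s) : shift ζ ∈ Es (shift s) :=
  fun i hi => h (i + 1) hi

lemma psi_pre : ∀ (k : ℕ) (s ζ : ℕ → Bool), ζ ∈ Es s →
    psi s (pre ζ k) = (2⁻¹ : ℝ≥0) ^ bb s k := by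
  intro k
  induction k with
  | zero => intro s ζ _; rw [pre_zero, psi_nil]; simp [bb]
  | succ k ih =>
    intro s ζ hζ
    rw [pre_cons, psi_cons, bb_cons]
    cases hs : s 0
    · have h0 : ζ 0 = false := hζ 0 hs
      rw [h0]
      simp only [Bool.cond_false]
      rw [ih (shift s) (shift ζ) (shift_mem_Es hζ)]
      simp
    · simp only [Bool.cond_true]
      rw [ih (shift s) (shift ζ) (shift_mem_Es hζ), pow_add, pow_one]

lemma cap_le {s : ℕ → Bool} (hR : Rv s ≠ ⊤) : treeCapN 0 (Es s) ≤ (Rv s)⁻¹ := by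
  set r := (Rv s).toNNReal with hrdef
  have hrc : (r : ℝ≥0∞) = Rv s := ENNReal.coe_toNNReal hR
  have hr0 : r ≠ 0 := by
    intro h
    have := one_le_Rv s
    rw [← hrc, h] at this
    simp at this
  set φ : List Bool → ℝ≥0 := fun x => r⁻¹ * psi s x with hφ
  have hmem : (∑' x : List Bool, ((φ x : ℝ≥0∞)) ^ 2) ∈
      { c | ∃ φ : List Bool → ℝ≥0,
        (∀ ζ ∈ Es s, 1 ≤ ∑' k : ℕ, (φ (pre ζ k) : ℝ≥0∞)) ∧
        (∀ x : List Bool, x.length < 0 → φ x = 0) ∧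
        c = ∑' x : List Bool, (φ x : ℝ≥0∞) ^ 2 } := by
    refine ⟨φ, ?_, fun x hx => absurd hx (Nat.not_lt_zero _), rfl⟩
    intro ζ hζ
    have hterm : ∀ k : ℕ, ((φ (pre ζ k) : ℝ≥0) : ℝ≥0∞) = (r⁻¹ : ℝ≥0∞) * w s k := by
      intro k
      rw [hφ]
      simp only
      rw [psi_pre k s ζ hζ, ENNReal.coe_mul, ENNReal.coe_inv hr0]
      rfl
    rw [tsum_congr hterm, ENNReal.tsum_mul_left]
    rw [show (∑' k, w s k) = Rv s from rfl, ← hrc, ← ENNReal.coe_inv hr0]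
    rw [← ENNReal.coe_mul, inv_mul_cancel₀ hr0]
    simp
  have hle : treeCapN 0 (Es s) ≤ ∑' x : List Bool, ((φ x : ℝ≥0∞)) ^ 2 := sInf_le hmem
  refine hle.trans ?_
  have hval : ∀ x : List Bool, ((φ x : ℝ≥0∞)) ^ 2
      = ((r⁻¹ : ℝ≥0) : ℝ≥0∞) ^ 2 * ((psi s x : ℝ≥0∞)) ^ 2 := by
    intro x
    rw [hφ]
    simp only
    rw [ENNReal.coe_mul, mul_pow]
  rw [tsum_congr hval, ENNReal.tsum_mul_left]
  calc ((r⁻¹ : ℝ≥0) : ℝ≥0∞) ^ 2 * ∑' x : List Bool, ((psi s x : ℝ≥0∞)) ^ 2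
      ≤ ((r⁻¹ : ℝ≥0) : ℝ≥0∞) ^ 2 * Rv s := by
        exact mul_le_mul_right (Q_le_R s) _
    _ = (Rv s)⁻¹ := by
        rw [← hrc, ENNReal.coe_inv hr0, sq, mul_assoc,
          ENNReal.inv_mul_cancel (by simpa using hr0) ENNReal.coe_ne_top, mul_one]

end TreeAux

namespace TreeAux

def shiftN (n : ℕ) (s : ℕ → Bool) : ℕ → Bool := fun i => s (n + i)

lemma shiftN_zero (s : ℕ → Bool) : shiftN 0 s = s := by
  funext i; simp [shiftN]

lemma shiftN_succ (n : ℕ) (s : ℕ → Bool) : shiftN (n + 1) s = shift (shiftN n s) := by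
  funext i; simp [shiftN, shift]; congr 1; omega

def pick (s : ℕ → Bool) (φ : List Bool → ℝ≥0) : Bool :=
  if s 0 = true ∧ Uv (shift s) (fun t => φ (true :: t)) ≤ Uv (shift s) (fun t => φ (false :: t))
  then true else false

lemma pick_false_of (s : ℕ → Bool) (φ : List Bool → ℝ≥0) (hs : s 0 = false) :
    pick s φ = false := by
  rw [pick, if_neg]
  rintro ⟨h1, -⟩
  rw [hs] at h1
  exact Bool.false_ne_true h1

lemma half_le {a b : ℝ≥0∞} (h : a ≤ b) : a ≤ 2⁻¹ * (a + b) := by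
  have h2 : 2 * a = a + a := two_mul a
  have : 2 * a ≤ a + b := by rw [h2]; exact add_le_add_right h a
  calc a = 2⁻¹ * (2 * a) := by
        rw [← mul_assoc, ENNReal.inv_mul_cancel (by norm_num) (by norm_num), one_mul]
    _ ≤ 2⁻¹ * (a + b) := mul_le_mul_right this _

lemma pick_le (s : ℕ → Bool) (φ : List Bool → ℝ≥0) :
    (φ [] : ℝ≥0∞) + Uv (shift s) (fun t => φ (pick s φ :: t)) ≤ Uv s φ := by
  rw [Uv_rec s φ]
  apply add_le_add_right
  cases hs : s 0
  · rw [pick_false_of s φ hs]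
    simp
  · simp only [Bool.cond_true]
    by_cases hc : Uv (shift s) (fun t => φ (true :: t)) ≤ Uv (shift s) (fun t => φ (false :: t))
    · have hp : pick s φ = true := by rw [pick, if_pos ⟨hs, hc⟩]
      rw [hp]
      rw [add_comm]
      exact half_le hc
    · have hp : pick s φ = false := by
        rw [pick, if_neg]; rintro ⟨-, h⟩; exact hc h
      rw [hp]
      exact half_le (le_of_not_ge hc)

variable (s : ℕ → Bool) (φ : List Bool → ℝ≥0)

def XX : ℕ → List Bool
  | 0 => []
  | n + 1 => XX n ++ [pick (shiftN n s) (fun t => φ (XX n ++ t))]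

def zeta : ℕ → Bool := fun n => pick (shiftN n s) (fun t => φ (XX s φ n ++ t))

lemma XX_succ (n : ℕ) : XX s φ (n + 1) = XX s φ n ++ [zeta s φ n] := rfl

lemma pre_zeta : ∀ n, pre (zeta s φ) n = XX s φ n := by
  intro n
  induction n with
  | zero => rw [pre_zero]; rfl
  | succ n ih => rw [pre_succ, ih, XX_succ]

lemma zeta_mem : zeta s φ ∈ Es s := by
  intro i hi
  apply pick_false_of
  simpa [shiftN] using hi

lemma invariant : ∀ n : ℕ,
    (∑ k ∈ Finset.range n, ((φ (XX s φ k) : ℝ≥0) : ℝ≥0∞))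
      + Uv (shiftN n s) (fun t => φ (XX s φ n ++ t)) ≤ Uv s φ := by
  intro n
  induction n with
  | zero =>
    rw [Finset.sum_range_zero, zero_add, shiftN_zero]
    have : (fun t => φ (XX s φ 0 ++ t)) = φ := by
      funext t; rfl
    rw [this]
  | succ n ih =>
    rw [Finset.sum_range_succ]
    have hkey : ((φ (XX s φ n) : ℝ≥0) : ℝ≥0∞)
        + Uv (shiftN (n + 1) s) (fun t => φ (XX s φ (n + 1) ++ t))
        ≤ Uv (shiftN n s) (fun t => φ (XX s φ n ++ t)) := by
      have h := pick_le (shiftN n s) (fun t => φ (XX s φ n ++ t))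
      rw [shiftN_succ]
      have h1 : (fun t => φ (XX s φ (n + 1) ++ t))
          = (fun t => φ (XX s φ n ++ (pick (shiftN n s) (fun t => φ (XX s φ n ++ t)) :: t))) := by
        funext t
        rw [XX_succ]
        congr 1
        rw [List.append_assoc, List.singleton_append]
        rfl
      rw [h1]
      have h2 : φ (XX s φ n) = φ (XX s φ n ++ []) := by rw [List.append_nil]
      rw [h2]
      exact h
    calc (∑ k ∈ Finset.range n, ((φ (XX s φ k) : ℝ≥0) : ℝ≥0∞)) + ((φ (XX s φ n) : ℝ≥0) : ℝ≥0∞)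
          + Uv (shiftN (n + 1) s) (fun t => φ (XX s φ (n + 1) ++ t))
        = (∑ k ∈ Finset.range n, ((φ (XX s φ k) : ℝ≥0) : ℝ≥0∞))
          + (((φ (XX s φ n) : ℝ≥0) : ℝ≥0∞)
            + Uv (shiftN (n + 1) s) (fun t => φ (XX s φ (n + 1) ++ t))) := by
          rw [add_assoc]
      _ ≤ (∑ k ∈ Finset.range n, ((φ (XX s φ k) : ℝ≥0) : ℝ≥0∞))
          + Uv (shiftN n s) (fun t => φ (XX s φ n ++ t)) := add_le_add_right hkey _
      _ ≤ Uv s φ := ih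

lemma one_le_U (hcon : ∀ ζ ∈ Es s, 1 ≤ ∑' k : ℕ, (φ (pre ζ k) : ℝ≥0∞)) :
    1 ≤ Uv s φ := by
  refine (hcon (zeta s φ) (zeta_mem s φ)).trans ?_
  rw [ENNReal.tsum_eq_iSup_sum]
  apply iSup_le
  intro A
  obtain ⟨n, hn⟩ := Finset.exists_nat_subset_range A
  calc (∑ k ∈ A, ((φ (pre (zeta s φ) k) : ℝ≥0) : ℝ≥0∞))
      ≤ ∑ k ∈ Finset.range n, ((φ (pre (zeta s φ) k) : ℝ≥0) : ℝ≥0∞) :=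
        Finset.sum_le_sum_of_subset hn
    _ = ∑ k ∈ Finset.range n, ((φ (XX s φ k) : ℝ≥0) : ℝ≥0∞) := by
        refine Finset.sum_congr rfl fun k _ => ?_
        rw [pre_zeta]
    _ ≤ Uv s φ := le_add_right le_rfl |>.trans (invariant s φ n)

end TreeAux

namespace TreeAux

lemma amgm (l a b : ℝ≥0) (hl : l ≠ 0) : a * b ≤ 2⁻¹ * (l * a ^ 2 + l⁻¹ * b ^ 2) := by
  set u := NNReal.sqrt l with hu
  have hu0 : u ≠ 0 := by
    simp [hu, hl]
  have husq : u ^ 2 = l := NNReal.sq_sqrt l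
  have key : 2 * (a * b) ≤ l * a ^ 2 + l⁻¹ * b ^ 2 := by
    have h2 : a * b = (u * a) * (u⁻¹ * b) := by
      field_simp
    calc 2 * (a * b) = 2 * (u * a) * (u⁻¹ * b) := by rw [h2]; ring
      _ ≤ (u * a) ^ 2 + (u⁻¹ * b) ^ 2 := two_mul_le_add_sq _ _
      _ = l * a ^ 2 + l⁻¹ * b ^ 2 := by
          rw [mul_pow, mul_pow, husq, inv_pow, husq]
  calc a * b = 2⁻¹ * (2 * (a * b)) := by
        rw [← mul_assoc, inv_mul_cancel₀ (two_ne_zero), one_mul]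
    _ ≤ 2⁻¹ * (l * a ^ 2 + l⁻¹ * b ^ 2) := mul_le_mul_right key _

lemma cap_ge {s : ℕ → Bool} (hR : Rv s ≠ ⊤) : (Rv s)⁻¹ ≤ treeCapN 0 (Es s) := by
  apply le_sInf
  rintro c ⟨φ, hcon, -, rfl⟩
  set Eφ := ∑' x : List Bool, ((φ x : ℝ≥0∞)) ^ 2 with hEφ
  by_cases hE : Eφ = ⊤
  · rw [hE]; exact le_top
  -- all quantities finite
  set R' := (Rv s).toNNReal with hR'
  have hRc : ((R' : ℝ≥0) : ℝ≥0∞) = Rv s := ENNReal.coe_toNNReal hR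
  have hR0 : R' ≠ 0 := by
    intro h
    have := one_le_Rv s
    rw [← hRc, h] at this
    simp at this
  set E' := Eφ.toNNReal with hE'
  have hEc : ((E' : ℝ≥0) : ℝ≥0∞) = Eφ := ENNReal.coe_toNNReal hE
  have h1 : 1 ≤ Uv s φ := one_le_U s φ hcon
  have key : ∀ l : ℝ≥0, l ≠ 0 →
      (1 : ℝ≥0∞) ≤ 2⁻¹ * ((l : ℝ≥0∞) * Rv s + ((l⁻¹ : ℝ≥0) : ℝ≥0∞) * Eφ) := by
    intro l hl
    have hpt : ∀ x : List Bool, ((psi s x * φ x : ℝ≥0) : ℝ≥0∞)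
        ≤ 2⁻¹ * ((l : ℝ≥0∞) * ((psi s x : ℝ≥0∞)) ^ 2 + ((l⁻¹ : ℝ≥0) : ℝ≥0∞) * ((φ x : ℝ≥0∞)) ^ 2) := by
      intro x
      have := amgm l (psi s x) (φ x) hl
      calc ((psi s x * φ x : ℝ≥0) : ℝ≥0∞)
          ≤ ((2⁻¹ * (l * psi s x ^ 2 + l⁻¹ * φ x ^ 2) : ℝ≥0) : ℝ≥0∞) :=
            ENNReal.coe_le_coe.mpr this
        _ = 2⁻¹ * ((l : ℝ≥0∞) * ((psi s x : ℝ≥0∞)) ^ 2 + ((l⁻¹ : ℝ≥0) : ℝ≥0∞) * ((φ x : ℝ≥0∞)) ^ 2) := by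
            rw [ENNReal.coe_mul, ENNReal.coe_add, ENNReal.coe_mul, ENNReal.coe_mul,
              ENNReal.coe_pow, ENNReal.coe_pow,
              ENNReal.coe_inv (by norm_num : (2 : ℝ≥0) ≠ 0)]
            norm_num
    calc (1 : ℝ≥0∞) ≤ Uv s φ := h1
      _ ≤ ∑' x : List Bool, 2⁻¹ * ((l : ℝ≥0∞) * ((psi s x : ℝ≥0∞)) ^ 2
            + ((l⁻¹ : ℝ≥0) : ℝ≥0∞) * ((φ x : ℝ≥0∞)) ^ 2) := ENNReal.tsum_le_tsum hpt
      _ = 2⁻¹ * ((l : ℝ≥0∞) * (∑' x : List Bool, ((psi s x : ℝ≥0∞)) ^ 2)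
            + ((l⁻¹ : ℝ≥0) : ℝ≥0∞) * Eφ) := by
          rw [ENNReal.tsum_mul_left, ENNReal.tsum_add, ENNReal.tsum_mul_left,
            ENNReal.tsum_mul_left]
      _ ≤ 2⁻¹ * ((l : ℝ≥0∞) * Rv s + ((l⁻¹ : ℝ≥0) : ℝ≥0∞) * Eφ) := by
          apply mul_le_mul_right
          apply add_le_add_left
          exact mul_le_mul_right (Q_le_R s) _
  -- conclude
  by_contra hcontra
  push_neg at hcontra
  have hERlt : E' * R' < 1 := by
    have h1' : Eφ < (Rv s)⁻¹ := hcontra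
    rw [← hEc, ← hRc, ← ENNReal.coe_inv hR0, ENNReal.coe_lt_coe] at h1'
    have := mul_lt_mul_of_pos_right h1' (pos_iff_ne_zero.mpr hR0)
    rwa [inv_mul_cancel₀ hR0] at this
  by_cases hE0 : E' = 0
  · -- choose l = R'⁻¹
    have hk := key R'⁻¹ (inv_ne_zero hR0)
    rw [← hEc, hE0] at hk
    simp only [ENNReal.coe_zero, mul_zero, add_zero] at hk
    rw [← hRc, ← ENNReal.coe_mul, inv_mul_cancel₀ hR0] at hk
    simp only [ENNReal.coe_one, mul_one] at hk
    have : (2 : ℝ≥0∞)⁻¹ < 1 := by norm_num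
    exact absurd (hk.trans_lt this) (lt_irrefl _)
  · set m := NNReal.sqrt (E' * R') with hm
    set l := NNReal.sqrt E' * (NNReal.sqrt R')⁻¹ with hl
    have hsE : NNReal.sqrt E' ≠ 0 := by simp [hE0]
    have hsR : NNReal.sqrt R' ≠ 0 := by simp [hR0]
    have hl0 : l ≠ 0 := mul_ne_zero hsE (inv_ne_zero hsR)
    have hlR : l * R' = m := by
      rw [hl, hm, NNReal.sqrt_mul]
      have : R' = NNReal.sqrt R' * NNReal.sqrt R' := (NNReal.mul_self_sqrt R').symm
      calc NNReal.sqrt E' * (NNReal.sqrt R')⁻¹ * R'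
          = NNReal.sqrt E' * ((NNReal.sqrt R')⁻¹ * (NNReal.sqrt R' * NNReal.sqrt R')) := by
            rw [mul_assoc, ← this]
        _ = NNReal.sqrt E' * NNReal.sqrt R' := by
            rw [inv_mul_cancel_left₀ hsR]
    have hlE : l⁻¹ * E' = m := by
      rw [hl, hm, NNReal.sqrt_mul, mul_inv, inv_inv]
      have : E' = NNReal.sqrt E' * NNReal.sqrt E' := (NNReal.mul_self_sqrt E').symm
      calc (NNReal.sqrt E')⁻¹ * NNReal.sqrt R' * E'
          = NNReal.sqrt R' * ((NNReal.sqrt E')⁻¹ * (NNReal.sqrt E' * NNReal.sqrt E')) := by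
            rw [← this]; ring
        _ = NNReal.sqrt R' * NNReal.sqrt E' := by rw [inv_mul_cancel_left₀ hsE]
        _ = NNReal.sqrt E' * NNReal.sqrt R' := mul_comm _ _
    have hk := key l hl0
    rw [← hEc, ← hRc, ← ENNReal.coe_mul, ← ENNReal.coe_mul, hlR, hlE, ← ENNReal.coe_add] at hk
    have hmm : ((m + m : ℝ≥0) : ℝ≥0∞) = 2 * (m : ℝ≥0∞) := by
      push_cast; ring
    rw [hmm, ← mul_assoc, ENNReal.inv_mul_cancel (by norm_num) (by norm_num), one_mul] at hk
    have hm1 : m < 1 := by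
      rw [hm]
      have : NNReal.sqrt (E' * R') < NNReal.sqrt 1 := by
        exact (NNReal.sqrt.lt_iff_lt).mpr hERlt
      simpa using this
    rw [ENNReal.one_le_coe_iff] at hk
    exact absurd (lt_of_le_of_lt hk hm1) (lt_irrefl _)

lemma cap_eq {s : ℕ → Bool} (hR : Rv s ≠ ⊤) : treeCapN 0 (Es s) = (Rv s)⁻¹ :=
  le_antisymm (cap_le hR) (cap_ge hR)

end TreeAux

namespace TreeAux

def cc (n : ℕ) : ℝ := (2⁻¹ : ℝ) ^ n

lemma cc_pos (n : ℕ) : 0 < cc n := pow_pos (by norm_num) n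

lemma cc_succ (n : ℕ) : cc (n + 1) = cc n * 2⁻¹ := pow_succ _ _

def st (r : ℝ) : ℕ → ℕ × ℝ
  | 0 => (0, r)
  | k + 1 =>
    let p := st r k
    if p.2 < 3 * cc p.1 then (p.1 + 1, p.2 - cc p.1) else (p.1, p.2 - cc p.1)

def sgr (r : ℝ) : ℕ → Bool := fun k => decide ((st r k).2 < 3 * cc (st r k).1)

variable {r : ℝ}

lemma st_succ_t (k : ℕ) : (st r (k + 1)).2 = (st r k).2 - cc (st r k).1 := by
  rw [st]
  split <;> rfl

lemma st_succ_n (k : ℕ) :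
    (st r (k + 1)).1 = (st r k).1 + (if (st r k).2 < 3 * cc (st r k).1 then 1 else 0) := by
  rw [st]
  split
  · simp_all
  · simp_all

lemma st_invariant (hr : 2 ≤ r) : ∀ k, 2 * cc (st r k).1 ≤ (st r k).2 := by
  intro k
  induction k with
  | zero => simpa [st, cc] using hr
  | succ k ih =>
    rw [st]
    split
    · next h =>
      simp only
      rw [cc_succ]
      nlinarith [cc_pos (st r k).1]
    · next h =>
      simp only
      push_neg at h
      nlinarith [cc_pos (st r k).1]

lemma st_t_pos (hr : 2 ≤ r) (k : ℕ) : 0 < (st r k).2 :=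
  lt_of_lt_of_le (mul_pos two_pos (cc_pos _)) (st_invariant hr k)

lemma st_n_mono (hr : 2 ≤ r) : Monotone (fun k => (st r k).1) := by
  apply monotone_nat_of_le_succ
  intro k
  rw [st_succ_n]
  split <;> omega

lemma st_t_anti (hr : 2 ≤ r) : ∀ j k, j ≤ k → (st r k).2 ≤ (st r j).2 := by
  intro j k hjk
  induction k with
  | zero =>
    rw [show j = 0 by omega]
  | succ k ih =>
    rcases Nat.lt_or_ge j (k+1) with h | h
    · have hstep : (st r (k+1)).2 ≤ (st r k).2 := by
        rw [st_succ_t]; linarith [cc_pos (st r k).1]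
      exact hstep.trans (ih (by omega))
    · rw [show j = k + 1 by omega]

-- while the state never halves from k on, n stays constant and t drops linearly
lemma st_eventually_halves (hr : 2 ≤ r) (k : ℕ) : ∃ j, k ≤ j ∧ sgr r j = true := by
  by_contra hcon
  push_neg at hcon
  have hnothalve : ∀ j, k ≤ j → ¬ ((st r j).2 < 3 * cc (st r j).1) := by
    intro j hj
    have := hcon j hj
    simpa [sgr] using this
  have hconst : ∀ m, (st r (k + m)).1 = (st r k).1 ∧
      (st r (k + m)).2 = (st r k).2 - m * cc (st r k).1 := by
    intro m
    induction m with
    | zero => simp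
    | succ m ih =>
      have hkm : k ≤ k + m := by omega
      constructor
      · rw [show k + (m+1) = (k+m) + 1 by omega, st_succ_n,
          if_neg (hnothalve (k+m) hkm), ih.1]
        omega
      · rw [show k + (m+1) = (k+m) + 1 by omega, st_succ_t, ih.1, ih.2]
        push_cast
        ring
  obtain ⟨m, hm⟩ := exists_nat_gt ((st r k).2 / cc (st r k).1)
  have h1 := (hconst m).2
  have h2 : 0 < (st r (k + m)).2 := st_t_pos hr (k + m)
  have hcp := cc_pos (st r k).1
  rw [h1] at h2
  have : (st r k).2 / cc (st r k).1 < m := hm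
  have : (st r k).2 < m * cc (st r k).1 := by
    rw [div_lt_iff₀ hcp] at this
    linarith
  linarith

lemma st_n_unbounded (hr : 2 ≤ r) : ∀ M : ℕ, ∃ k, M ≤ (st r k).1 := by
  intro M
  induction M with
  | zero => exact ⟨0, by omega⟩
  | succ M ih =>
    obtain ⟨k, hk⟩ := ih
    obtain ⟨j, hkj, hj⟩ := st_eventually_halves hr k
    refine ⟨j + 1, ?_⟩
    have hmono := st_n_mono hr hkj
    simp only at hmono
    have : (st r (j+1)).1 = (st r j).1 + 1 := by
      rw [st_succ_n, if_pos]
      simpa [sgr] using hj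
    omega

lemma st_cc_tendsto (hr : 2 ≤ r) :
    Tendsto (fun k => cc (st r k).1) atTop (𝓝 0) := by
  have hn : Tendsto (fun k => (st r k).1) atTop atTop := by
    apply tendsto_atTop_atTop.mpr
    intro M
    obtain ⟨k, hk⟩ := st_n_unbounded hr M
    exact ⟨k, fun j hj => hk.trans (st_n_mono hr hj)⟩
  have hpow : Tendsto (fun n : ℕ => (2⁻¹ : ℝ) ^ n) atTop (𝓝 0) :=
    tendsto_pow_atTop_nhds_zero_of_lt_one (by norm_num) (by norm_num)
  exact hpow.comp hn

lemma st_event_bound (hr : 2 ≤ r) :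
    ∃ k0, ∀ k, k0 ≤ k → (st r k).2 ≤ 4 * cc (st r k).1 := by
  obtain ⟨j, -, hj⟩ := st_eventually_halves hr 0
  have hjlt : (st r j).2 < 3 * cc (st r j).1 := by simpa [sgr] using hj
  refine ⟨j + 1, ?_⟩
  have step : ∀ k, (st r k).2 ≤ 4 * cc (st r k).1 →
      (st r (k + 1)).2 ≤ 4 * cc (st r (k + 1)).1 := by
    intro k hk
    by_cases h : (st r k).2 < 3 * cc (st r k).1
    · have hn : (st r (k+1)).1 = (st r k).1 + 1 := by rw [st_succ_n, if_pos h]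
      rw [st_succ_t, hn, cc_succ]
      linarith [cc_pos (st r k).1]
    · have hn : (st r (k+1)).1 = (st r k).1 := by rw [st_succ_n, if_neg h]; omega
      rw [st_succ_t, hn]
      linarith [cc_pos (st r k).1]
  have base : (st r (j + 1)).2 ≤ 4 * cc (st r (j + 1)).1 := by
    have hn : (st r (j+1)).1 = (st r j).1 + 1 := by rw [st_succ_n, if_pos hjlt]
    rw [st_succ_t, hn, cc_succ]
    linarith [cc_pos (st r j).1]
  intro k hk
  obtain ⟨m, rfl⟩ := Nat.exists_eq_add_of_le hk
  induction m with
  | zero => simpa using base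
  | succ m ih =>
    rw [show j + 1 + (m + 1) = (j + 1 + m) + 1 by omega]
    exact step _ (ih (by omega))

lemma st_t_tendsto (hr : 2 ≤ r) : Tendsto (fun k => (st r k).2) atTop (𝓝 0) := by
  have h4 : Tendsto (fun k => 4 * cc (st r k).1) atTop (𝓝 0) := by
    have := (st_cc_tendsto hr).const_mul (4 : ℝ)
    simpa using this
  apply tendsto_of_tendsto_of_tendsto_of_le_of_le' tendsto_const_nhds h4
  · exact Eventually.of_forall fun k => (st_t_pos hr k).le
  · obtain ⟨k0, hk0⟩ := st_event_bound hr
    filter_upwards [eventually_ge_atTop k0] with k hk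
    exact hk0 k hk

lemma bb_succ : ∀ (k : ℕ) (s : ℕ → Bool), bb s (k + 1) = bb s k + (bif s k then 1 else 0) := by
  intro k
  induction k with
  | zero => intro s; simp [bb, shift]
  | succ k ih =>
    intro s
    rw [bb_cons, ih (shift s), bb_cons]
    simp [shift]
    omega

lemma bb_sgr (hr : 2 ≤ r) : ∀ k, bb (sgr r) k = (st r k).1 := by
  intro k
  induction k with
  | zero => simp [bb, st]
  | succ k ih =>
    rw [bb_succ, ih, st_succ_n, sgr]
    by_cases h : (st r k).2 < 3 * cc (st r k).1
    · simp [h]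
    · simp [h]

lemma st_partial_sum (hr : 2 ≤ r) :
    ∀ k, ∑ j ∈ Finset.range k, cc (st r j).1 = r - (st r k).2 := by
  intro k
  induction k with
  | zero => simp [st]
  | succ k ih =>
    rw [Finset.sum_range_succ, ih, st_succ_t]
    ring

lemma w_sgr_ofReal (hr : 2 ≤ r) (k : ℕ) :
    w (sgr r) k = ENNReal.ofReal (cc (st r k).1) := by
  rw [w, bb_sgr hr, cc, ENNReal.ofReal_pow (by norm_num)]
  have h2 : ENNReal.ofReal ((2:ℝ)⁻¹) = ((2⁻¹ : ℝ≥0) : ℝ≥0∞) := by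
    rw [ENNReal.ofReal_inv_of_pos (by norm_num), ENNReal.coe_inv (by norm_num)]
    norm_num
  rw [h2, ENNReal.coe_pow]

lemma Rv_sgr (hr : 2 ≤ r) : Rv (sgr r) = ENNReal.ofReal r := by
  have hlim1 : Tendsto (fun N => ∑ k ∈ Finset.range N, w (sgr r) k) atTop (𝓝 (Rv (sgr r))) :=
    ENNReal.tendsto_nat_tsum _
  have heq : ∀ N, ∑ k ∈ Finset.range N, w (sgr r) k = ENNReal.ofReal (r - (st r N).2) := by
    intro N
    rw [Finset.sum_congr rfl (fun k _ => w_sgr_ofReal hr k),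
      ← ENNReal.ofReal_sum_of_nonneg (fun k _ => (cc_pos _).le), st_partial_sum hr]
  have hlim2 : Tendsto (fun N => ∑ k ∈ Finset.range N, w (sgr r) k) atTop
      (𝓝 (ENNReal.ofReal r)) := by
    simp_rw [heq]
    apply ENNReal.tendsto_ofReal
    have := (st_t_tendsto hr).const_sub r
    simpa using this
  exact tendsto_nhds_unique hlim1 hlim2

end TreeAux

namespace TreeAux
lemma treeCap_empty : treeCap (∅ : Set (ℕ → Bool)) = 0 := by
  apply le_antisymm _ zero_le
  apply sInf_le
  refine ⟨fun _ => 0, ?_, ?_, ?_⟩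
  · intro ζ hζ
    exact absurd hζ (Set.notMem_empty ζ)
  · intro x _; rfl
  · simp

end TreeAux

/-- For every real number `e` with `0 ≤ e ≤ 1/2` there exists a
closed subset `E` of `∂T` such that `cap^T(E) = e`. -/
theorem tree_capacity_attains_every_value (e : ℝ) (h0 : 0 ≤ e) (h1 : e ≤ 1/2) :
    ∃ E : Set (ℕ → Bool), IsClosed E ∧ treeCap E = ENNReal.ofReal e := by
  rcases eq_or_lt_of_le h0 with he | he
  · refine ⟨∅, isClosed_empty, ?_⟩
    rw [← he, ENNReal.ofReal_zero]
    exact TreeAux.treeCap_empty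
  · -- 0 < e ≤ 1/2
    set r := e⁻¹ with hrdef
    have hr : 2 ≤ r := by
      rw [hrdef, show (2:ℝ) = (2⁻¹)⁻¹ by norm_num]
      apply inv_anti₀ he
      linarith
    refine ⟨TreeAux.Es (TreeAux.sgr r), TreeAux.isClosed_Es _, ?_⟩
    have hRv : TreeAux.Rv (TreeAux.sgr r) = ENNReal.ofReal r := TreeAux.Rv_sgr hr
    have hfin : TreeAux.Rv (TreeAux.sgr r) ≠ ⊤ := by
      rw [hRv]; exact ENNReal.ofReal_ne_top
    rw [treeCap, TreeAux.cap_eq hfin, hRv, hrdef,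
      ENNReal.ofReal_inv_of_pos he, inv_inv]
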